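/- If (a_N)_{N≥1} are positive integers satisfying the formal power series identity Π_{k≥1}(1 − x^k)^{−a_k} = 1/(1 − qx) over Q for an integer q ≥ 1, then Σ_{d | N} (d) a_d = q^N for every N ≥ 1. -/

import Mathlib

open PowerSeries
noncomputable def gg (k : ℕ) : PowerSeries ℚ :=
  PowerSeries.mk fun n => if k ∣ n ∧ 0 < n then 1 else 0

lemma gg_mul (k : ℕ) (hk : 1 ≤ k) : (1 - X ^ k) * gg k = (X : PowerSeries ℚ) ^ k := by
  ext n
  rw [sub_mul, one_mul, map_sub, coeff_X_pow_mul', coeff_X_pow]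
  simp only [gg, coeff_mk]
  rcases le_or_gt k n with h | h
  · rw [if_pos h]
    rcases eq_or_lt_of_le h with rfl | h2
    · simp [Nat.pos_of_ne_zero, hk, Nat.lt_of_lt_of_le Nat.zero_lt_one hk]
    · have h3 : ¬ n = k := by omega
      have hd : k ∣ n - k ↔ k ∣ n := by
        constructor
        · intro hh; have := Nat.dvd_add hh (dvd_refl k); rwa [Nat.sub_add_cancel h] at this
        · intro hh; exact Nat.dvd_sub hh (dvd_refl k)
      have h0 : 0 < n := by omega
      have h0' : 0 < n - k := by omega
      simp only [h0, and_true, h0', hd, if_neg h3]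
      ring
  · have h1 : ¬ n = k := by omega
    have h2 : ¬ (k ∣ n ∧ 0 < n) := by rintro ⟨hd, hp⟩; exact absurd (Nat.le_of_dvd hp hd) (by omega)
    simp [h1, h2, if_neg (not_le.mpr h)]


lemma key (k m : ℕ) (hk : 1 ≤ k) (hm : 1 ≤ m) :
    X * (d⁄dX ℚ ((1 - X ^ k) ^ m))
      = -(C ((k : ℚ) * m)) * gg k * (1 - X ^ k) ^ m := by
  obtain ⟨k', rfl⟩ : ∃ k', k = k' + 1 := ⟨k - 1, by omega⟩
  obtain ⟨m', rfl⟩ : ∃ m', m = m' + 1 := ⟨m - 1, by omega⟩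
  have hg := gg_mul (k' + 1) (by omega)
  have hD : d⁄dX ℚ ((1 : PowerSeries ℚ) - X ^ (k' + 1)) = -((k' + 1) • X ^ k') := by
    rw [map_sub, Derivation.map_one_eq_zero, Derivation.leibniz_pow]
    simp
  rw [Derivation.leibniz_pow, hD]
  simp only [smul_eq_mul, nsmul_eq_mul, smul_neg, Nat.add_sub_cancel, Nat.cast_add,
    Nat.cast_one, map_mul, map_add, map_one, map_natCast]
  linear_combination (((m' : PowerSeries ℚ) + 1) * ((k' : PowerSeries ℚ) + 1)
    * (1 - X ^ (k' + 1)) ^ m') * hg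


section
variable (a : ℕ → ℕ)

noncomputable def PP (N : ℕ) : PowerSeries ℚ := ∏ k ∈ Finset.Icc 1 N, (1 - X ^ k) ^ (a k)
noncomputable def SS (N : ℕ) : PowerSeries ℚ :=
  ∑ k ∈ Finset.Icc 1 N, C ((k : ℚ) * (a k)) * gg k

lemma prodkey (ha : ∀ k : ℕ, 1 ≤ k → 1 ≤ a k) (N : ℕ) :
    X * (d⁄dX ℚ (PP a N)) = -(SS a N) * PP a N := by
  induction N with
  | zero => simp [PP, SS]
  | succ n ih =>
    have h1 : (1:ℕ) ≤ n + 1 := by omega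
    rw [PP, SS, Finset.prod_Icc_succ_top h1, Finset.sum_Icc_succ_top h1, ← PP, ← SS,
      Derivation.leibniz]
    simp only [smul_eq_mul]
    have hkey := key (n + 1) (a (n + 1)) h1 (ha (n + 1) h1)
    linear_combination (PP a n) * hkey + ((1 - X ^ (n + 1)) ^ (a (n + 1))) * ih

lemma prod_sub_one_dvd (m : ℕ) (f : ℕ → PowerSeries ℚ) (s : Finset ℕ)
    (h : ∀ k ∈ s, (X : PowerSeries ℚ) ^ m ∣ f k - 1) :
    (X : PowerSeries ℚ) ^ m ∣ (∏ k ∈ s, f k) - 1 := by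
  induction s using Finset.induction_on with
  | empty => simp
  | insert b t hx ih =>
    rw [Finset.prod_insert hx]
    have h1 := h b (Finset.mem_insert_self b t)
    have h2 := ih fun k hk => h k (Finset.mem_insert_of_mem hk)
    have : f b * (∏ k ∈ t, f k) - 1 = f b * ((∏ k ∈ t, f k) - 1) + (f b - 1) := by ring
    rw [this]
    exact dvd_add (Dvd.dvd.mul_left h2 _) h1

lemma stab (n N : ℕ) (hn : n ≤ N) :
    coeff n (PP a N) = coeff n (PP a n) := by
  have hsplit : PP a N = PP a n * ∏ k ∈ Finset.Ioc n N, (1 - X ^ k) ^ (a k) := by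
    rw [PP, PP]
    have : ∀ M, Finset.Icc 1 M = Finset.Ioc 0 M := by
      intro M; ext x; simp [Finset.mem_Icc, Finset.mem_Ioc]; omega
    rw [this N, this n, Finset.prod_Ioc_consecutive _ (Nat.zero_le n) hn]
  have hdvd : (X : PowerSeries ℚ) ^ (n + 1) ∣ (∏ k ∈ Finset.Ioc n N, (1 - X ^ k) ^ (a k)) - 1 := by
    apply prod_sub_one_dvd
    intro k hk
    rw [Finset.mem_Ioc] at hk
    have h1 : ((1 : PowerSeries ℚ) - X ^ k) - 1 ∣ ((1 - X ^ k) ^ (a k)) - 1 := by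
      have := sub_dvd_pow_sub_pow ((1 : PowerSeries ℚ) - X ^ k) 1 (a k)
      simpa using this
    have h2 : (X : PowerSeries ℚ) ^ (n + 1) ∣ ((1 : PowerSeries ℚ) - X ^ k) - 1 := by
      have : ((1 : PowerSeries ℚ) - X ^ k) - 1 = -(X ^ k) := by ring
      rw [this, dvd_neg]
      exact pow_dvd_pow _ (by omega)
    exact h2.trans h1
  obtain ⟨c, hc⟩ := hdvd
  have : PP a N = PP a n + PP a n * (X ^ (n + 1) * c) := by
    rw [hsplit, ← hc]; ring
  rw [this, map_add]
  have hz : coeff n (PP a n * (X ^ (n + 1) * c)) = 0 := by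
    have hd : (X : PowerSeries ℚ) ^ (n + 1) ∣ PP a n * (X ^ (n + 1) * c) :=
      Dvd.dvd.mul_left (Dvd.intro c rfl) _
    exact (X_pow_dvd_iff.mp hd) n (by omega)
  rw [hz, add_zero]

lemma coeffSS (n N : ℕ) (hn : n ≤ N) :
    coeff n (SS a N) = if 0 < n then (∑ d ∈ n.divisors, (d : ℚ) * (a d)) else 0 := by
  rw [SS, map_sum]
  have hterm : ∀ k ∈ Finset.Icc 1 N,
      coeff n (C ((k : ℚ) * (a k)) * gg k)
        = if k ∣ n ∧ 0 < n then (k : ℚ) * (a k) else 0 := by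
    intro k hk
    rw [coeff_C_mul, gg, coeff_mk]
    split <;> simp
  rw [Finset.sum_congr rfl hterm, Finset.sum_ite, Finset.sum_const, smul_zero, add_zero]
  by_cases hpos : 0 < n
  · rw [if_pos hpos]
    have hfil : Finset.filter (fun k => k ∣ n ∧ 0 < n) (Finset.Icc 1 N) = n.divisors := by
      ext d
      simp only [Finset.mem_filter, Finset.mem_Icc, Nat.mem_divisors]
      constructor
      · rintro ⟨⟨h1, h2⟩, hd, _⟩; exact ⟨hd, by omega⟩
      · rintro ⟨hd, hn0⟩
        have hd1 : 1 ≤ d := Nat.pos_of_dvd_of_pos hd hpos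
        have hd2 : d ≤ n := Nat.le_of_dvd hpos hd
        exact ⟨⟨hd1, by omega⟩, hd, hpos⟩
    rw [hfil]
  · rw [if_neg hpos]
    have : Finset.filter (fun k => k ∣ n ∧ 0 < n) (Finset.Icc 1 N) = ∅ := by
      ext d; simp [Finset.mem_filter]; intro _ _ _; omega
    simp [this]
end


open scoped BigOperators

theorem divisor_sum_of_product_identity (q : ℕ) (hq : 1 ≤ q)
    (a : ℕ → ℕ) (ha : ∀ k : ℕ, 1 ≤ k → 1 ≤ a k)
    (hprod : ∀ n : ℕ,
      PowerSeries.coeff (R := ℚ) n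
          (∏ k ∈ Finset.Icc 1 n, (1 - PowerSeries.X ^ k) ^ (a k))
        = PowerSeries.coeff (R := ℚ) n
            (1 - PowerSeries.C (R := ℚ) (q : ℚ) * PowerSeries.X)) :
    ∀ N : ℕ, 1 ≤ N → ∑ d ∈ N.divisors, d * a d = q ^ N := by
  have hprod' : ∀ n : ℕ, coeff n (PP a n) = coeff n (1 - C (q : ℚ) * X) := hprod
  have hcoeff1qx : ∀ j, coeff j (1 - C (q : ℚ) * X)
      = (if j = 0 then (1 : ℚ) else 0) - (q : ℚ) * (if j = 1 then 1 else 0) := by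
    intro j
    rw [map_sub, coeff_one, coeff_C_mul, coeff_X]
  have main : ∀ n : ℕ,
      (coeff (n + 1) (1 - C (q : ℚ) * X)) * (n + 1)
        = -(coeff (n + 1) (SS a (n + 1))) + (q : ℚ) * coeff n (SS a (n + 1)) := by
    intro n
    have hp := congrArg (coeff (n + 1)) (prodkey a ha (n + 1))
    have hL : coeff (n + 1) (X * (d⁄dX ℚ (PP a (n + 1))))
        = coeff (n + 1) (1 - C (q : ℚ) * X) * ((n : ℚ) + 1) := by
      rw [coeff_succ_X_mul, coeff_derivative]
      rw [stab a (n + 1) (n + 1) le_rfl, hprod' (n + 1)]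
    have hPcoe : ∀ j, j ≤ n + 1 → coeff j (PP a (n + 1)) = coeff j (1 - C (q : ℚ) * X) := by
      intro j hj
      rw [stab a j (n + 1) hj, hprod' j]
    have e1 : coeff (n + 1) (SS a (n + 1) * PP a (n + 1))
        = coeff (n + 1) (SS a (n + 1) * (1 - C (q : ℚ) * X)) := by
      rw [coeff_mul, coeff_mul]
      apply Finset.sum_congr rfl
      intro p hp'
      rw [Finset.HasAntidiagonal.mem_antidiagonal] at hp'
      rw [hPcoe p.2 (by omega)]
    have e2 : coeff (n + 1) (SS a (n + 1) * (1 - C (q : ℚ) * X))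
        = coeff (n + 1) (SS a (n + 1)) - (q : ℚ) * coeff n (SS a (n + 1)) := by
      have hre : SS a (n + 1) * (1 - C (q : ℚ) * X)
          = SS a (n + 1) - C (q : ℚ) * (X * SS a (n + 1)) := by ring
      rw [hre, map_sub, coeff_C_mul, coeff_succ_X_mul]
    have hR : coeff (n + 1) (-(SS a (n + 1)) * PP a (n + 1))
        = -(coeff (n + 1) (SS a (n + 1))) + (q : ℚ) * coeff n (SS a (n + 1)) := by
      rw [neg_mul, map_neg, e1, e2]
      ring
    rw [hL, hR] at hp
    exact hp
  have hDq : ∀ n : ℕ, 1 ≤ n → coeff n (SS a n) = (q : ℚ) ^ n := by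
    intro n
    induction n with
    | zero => omega
    | succ m ih =>
      intro _
      have hm := main m
      rw [hcoeff1qx (m + 1)] at hm
      rcases Nat.eq_zero_or_pos m with rfl | hm0
      · have h0 : coeff 0 (SS a 1) = 0 := by rw [coeffSS a 0 1 (by omega)]; simp
        rw [h0] at hm
        simp at hm
        simp [hm]
      · have hstep : coeff m (SS a (m + 1)) = coeff m (SS a m) := by
          rw [coeffSS a m (m + 1) (by omega), coeffSS a m m le_rfl]
        rw [hstep, ih hm0] at hm
        have hne : ¬ (m + 1 = 0) := by omega
        have hne1 : ¬ (m + 1 = 1) := by omega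
        rw [if_neg hne, if_neg hne1] at hm
        simp only [mul_zero, sub_zero, zero_mul] at hm
        have : coeff (m + 1) (SS a (m + 1)) = (q : ℚ) * (q : ℚ) ^ m := by linarith
        rw [this, pow_succ]
        ring
  intro N hN
  have h1 := hDq N hN
  rw [coeffSS a N N le_rfl, if_pos (by omega : 0 < N)] at h1
  have h2 : ((∑ d ∈ N.divisors, d * a d : ℕ) : ℚ) = ((q ^ N : ℕ) : ℚ) := by
    push_cast
    exact h1
  exact_mod_cast h2
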